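/- Let (t_n) be a k-admissible, (k−1)-regular knot sequence and let Δ = D_{m,i}^{(k−1)} be a span of k consecutive knots in 𝒯_m. Let N(Δ) be the set of indices n such that Δ contains exactly k knots of 𝒯_n (with multiplicity) and the characteristic interval J_n is contained in Δ. Then Σ_{n∈N(Δ)} |J_n| ≤ c_k |Δ| with c_k depending only on k. -/

import Mathlib

open MeasureTheory Set Filter

attribute [local instance] Classical.propDecidable

noncomputable section

/-- A `k`-admissible knot sequence on `[0,1]`: `t 0 = 0`, `t 1 = 1`, the points
`t n` for `n ≥ 2` are dense in the open unit interval and every value is attained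
at most `k` times. -/
structure KnotSeq (k : ℕ) where
  t : ℕ → ℝ
  two_le : 2 ≤ k
  t0 : t 0 = 0
  t1 : t 1 = 1
  mem_Ioo : ∀ n, 2 ≤ n → t n ∈ Set.Ioo (0:ℝ) 1
  dense' : ∀ x ∈ Set.Icc (0:ℝ) 1, ∀ ε : ℝ, 0 < ε → ∃ n, 2 ≤ n ∧ |t n - x| < ε
  mult_finite : ∀ x : ℝ, ({n | 2 ≤ n ∧ t n = x} : Set ℕ).Finite
  mult_le : ∀ x : ℝ, ({n | 2 ≤ n ∧ t n = x} : Set ℕ).ncard ≤ k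

variable {k : ℕ}

/-- The sorted list of knots of the partition `𝒯_n`: the points `t 2, …, t n`
together with `0` and `1`, each with multiplicity `k`. -/
noncomputable def KnotSeq.plist (K : KnotSeq k) (n : ℕ) : List ℝ :=
  (List.replicate k (0:ℝ) ++ List.replicate k (1:ℝ) ++
    ((List.range (n-1)).map (fun j => K.t (j+2)))).mergeSort (fun a b => decide (a ≤ b))

/-- `K.τ n i` is the `i`-th knot `τ_{n,i}` of the partition `𝒯_n` (1-indexed,
`1 ≤ i ≤ n + 2k - 1`). -/
noncomputable def KnotSeq.τ (K : KnotSeq k) (n i : ℕ) : ℝ := (K.plist n).getD (i-1) 0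

/-- The length `|D_{n,i}^{(ℓ)}| = τ_{n,i+ℓ} - τ_{n,i}`. -/
noncomputable def KnotSeq.len (K : KnotSeq k) (n i ℓ : ℕ) : ℝ := K.τ n (i+ℓ) - K.τ n i

/-- `ℓ`-regularity with parameter `γ`: neighbouring spans of `ℓ+1` consecutive
knots have comparable lengths. -/
def KnotSeq.Regular (K : KnotSeq k) (ℓ : ℕ) (γ : ℝ) : Prop :=
  ∀ n, 2 ≤ n → ∀ i, k - ℓ + 1 ≤ i → i ≤ n + k - 2 →
    K.len n i ℓ / γ ≤ K.len n (i+1) ℓ ∧ K.len n (i+1) ℓ ≤ γ * K.len n i ℓ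

/-- Truncated power function `x ↦ (x-a)_+^d`. -/
def truncPow (a : ℝ) (d : ℕ) : ℝ → ℝ := fun x => (max (x - a) 0) ^ d

/-- Multiplicity of the knot `t j` among `t 2, …, t j`. -/
noncomputable def KnotSeq.multUpTo (K : KnotSeq k) (j : ℕ) : ℕ :=
  ({i | 2 ≤ i ∧ i ≤ j ∧ K.t i = K.t j} : Set ℕ).ncard

/-- The space `𝒮_n^{(k)}` of splines of order `k` with knots `𝒯_n`, realized as the
span of polynomials of degree `< k` and appropriate truncated powers. -/
noncomputable def KnotSeq.splineSpace (K : KnotSeq k) (n : ℕ) : Submodule ℝ (ℝ → ℝ) :=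
  Submodule.span ℝ
    ({f | ∃ d, d < k ∧ f = fun x : ℝ => x ^ d} ∪
     {f | ∃ j, 2 ≤ j ∧ j ≤ n ∧ f = truncPow (K.t j) (k - K.multUpTo j)})

/-- The increasing ladder of spaces, reindexed over `ℕ`: index `m` corresponds to the
paper's index `n = m - k + 2`; for `m < k` we get polynomials of degree `≤ m`. -/
noncomputable def KnotSeq.sys (K : KnotSeq k) (m : ℕ) : Submodule ℝ (ℝ → ℝ) :=
  if m < k then Submodule.span ℝ {f | ∃ d, d ≤ m ∧ f = fun x : ℝ => x ^ d}
  else K.splineSpace (m - k + 2)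

/-- `f` is the orthonormal spline system of order `k` associated with `K`
(reindexed so that the paper's `f_n` is `f (n + k - 2)`). -/
def KnotSeq.IsOSS (K : KnotSeq k) (f : ℕ → ℝ → ℝ) : Prop :=
  ∀ m, f m ∈ K.sys m ∧ (∫ x in (0:ℝ)..1, (f m x)^2) = 1 ∧
    ∀ m', m' < m → ∀ g ∈ K.sys m', (∫ x in (0:ℝ)..1, f m x * g x) = 0

/-- The (last) position `i₀` of the newly inserted knot `t n` inside `𝒯_n`. -/
noncomputable def KnotSeq.i0 (K : KnotSeq k) (n : ℕ) : ℕ :=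
  k + ({j | 2 ≤ j ∧ j ≤ n ∧ K.t j < K.t n} : Set ℕ).ncard
    + ({j | 2 ≤ j ∧ j ≤ n ∧ K.t j = K.t n} : Set ℕ).ncard

/-- `|α_j|`, the absolute value of the coefficient from formula (3.2) of the paper. -/
noncomputable def KnotSeq.absα (K : KnotSeq k) (n j : ℕ) : ℝ :=
  (∏ l ∈ Finset.Ico (K.i0 n - k + 1) j,
      (K.τ n (K.i0 n) - K.τ n l) / (K.τ n (l+k) - K.τ n l)) *
  (∏ l ∈ Finset.Ico (j+1) (K.i0 n),
      (K.τ n (l+k) - K.τ n (K.i0 n)) / (K.τ n (l+k) - K.τ n l))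

/-- `Λ⁰`: indices whose B-spline support is approximately minimal. -/
noncomputable def KnotSeq.Λ0 (K : KnotSeq k) (n : ℕ) : Finset ℕ :=
  (Finset.Icc (K.i0 n - k) (K.i0 n)).filter (fun j =>
    ∀ l ∈ Finset.Icc (K.i0 n - k) (K.i0 n), K.len n j k ≤ 2 * K.len n l k)

/-- `Λ¹`: indices of `Λ⁰` with maximal `|α_j|`. -/
noncomputable def KnotSeq.Λ1 (K : KnotSeq k) (n : ℕ) : Finset ℕ :=
  (K.Λ0 n).filter (fun j => ∀ l ∈ K.Λ0 n, K.absα n l ≤ K.absα n j)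

/-- `J` is a characteristic interval for the pair `(𝒯_n, 𝒯_{n-1})`: a knot interval
of maximal length inside the support `[τ_{j⁰}, τ_{j⁰+k}]` for some `j⁰ ∈ Λ¹`. -/
def KnotSeq.IsCharInterval (K : KnotSeq k) (n : ℕ) (J : Set ℝ) : Prop :=
  ∃ j0 ∈ K.Λ1 n, ∃ l, l < k ∧
    J = Set.Icc (K.τ n (j0+l)) (K.τ n (j0+l+1)) ∧
    ∀ l' < k, K.len n (j0+l') 1 ≤ K.len n (j0+l) 1

/-- `d_n`-type count: the number of knots of `𝒯_n` (with multiplicity) lying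
between the sets `A` and `B` (including endpoints of both). -/
noncomputable def KnotSeq.dcount (K : KnotSeq k) (n : ℕ) (A B : Set ℝ) : ℕ :=
  ((Finset.Icc 1 (n+2*k-1)).filter (fun i =>
    K.τ n i ∈ Set.Icc (min (sSup A) (sSup B)) (max (sInf A) (sInf B)))).card

/-- Distance between two (closed bounded) intervals. -/
noncomputable def setDist (A B : Set ℝ) : ℝ := max (max (sInf B - sSup A) (sInf A - sSup B)) 0

/-- Cox–de Boor B-splines of order `m` (degree `m-1`) on the knots `τ`. -/
noncomputable def Bspline (τ : ℕ → ℝ) : ℕ → ℕ → ℝ → ℝ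
  | _, 0, _ => 0
  | i, 1, x => if τ i ≤ x ∧ x < τ (i+1) then (1:ℝ) else 0
  | i, (m+2), x =>
      (if τ (i+m+1) = τ i then 0 else (x - τ i) / (τ (i+m+1) - τ i)) * Bspline τ i (m+1) x
    + (if τ (i+m+2) = τ (i+1) then 0 else (τ (i+m+2) - x) / (τ (i+m+2) - τ (i+1))) *
        Bspline τ (i+1) (m+1) x

/-- An `H¹[0,1]`-atom. -/
def IsAtom1 (a : ℝ → ℝ) : Prop :=
  Measurable a ∧
  ((∀ x ∈ Set.Icc (0:ℝ) 1, a x = 1) ∨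
   ∃ α β : ℝ, 0 ≤ α ∧ α < β ∧ β ≤ 1 ∧
     (∀ x, x ∉ Set.Icc α β → a x = 0) ∧
     (∀ x, |a x| ≤ (β - α)⁻¹) ∧
     (∫ x in α..β, a x) = 0)

/-- `c, a` is an atomic representation of `f` in `H¹[0,1]` (convergence in `L¹`). -/
def H1Rep (f : ℝ → ℝ) (c : ℕ → ℝ) (a : ℕ → ℝ → ℝ) : Prop :=
  (∀ n, IsAtom1 (a n)) ∧ Summable (fun n => |c n|) ∧
  Filter.Tendsto
    (fun N => ∫ x in Set.Icc (0:ℝ) 1, |f x - ∑ n ∈ Finset.range N, c n * a n x|)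
    Filter.atTop (nhds 0)

/-- Membership in the atomic Hardy space `H¹[0,1]`. -/
def MemH1 (f : ℝ → ℝ) : Prop := ∃ c a, H1Rep f c a

/-- The atomic `H¹[0,1]` norm. -/
noncomputable def H1norm (f : ℝ → ℝ) : ℝ :=
  sInf {s | ∃ c a, H1Rep f c a ∧ s = ∑' n, |c n|}

/-- The square function of the series `∑ aₙ fₙ`. -/
noncomputable def Pfun (a : ℕ → ℝ) (f : ℕ → ℝ → ℝ) (x : ℝ) : ℝ :=
  Real.sqrt (∑' m, (a m * f m x)^2)

/-- The maximal function of the partial sums of the series `∑ aₙ fₙ`. -/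
noncomputable def Sfun (a : ℕ → ℝ) (f : ℕ → ℝ → ℝ) (x : ℝ) : ℝ :=
  ⨆ N : ℕ, |∑ m ∈ Finset.range N, a m * f m x|

end


namespace SCIA

lemma card_le_pred {B : Finset ℕ} {r : ℕ} (h : ∀ q ∈ B, (B.filter (· < q)).card ≤ r) :
    B.card ≤ r + 1 := by
  by_contra hc
  push_neg at hc
  have hne : B.Nonempty := Finset.card_pos.mp (by omega)
  have hmax := B.max'_mem hne
  have hfe : B.filter (· < B.max' hne) = B.erase (B.max' hne) := by
    ext q
    simp only [Finset.mem_filter, Finset.mem_erase]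
    constructor
    · rintro ⟨hq, hlt⟩; exact ⟨by omega, hq⟩
    · rintro ⟨hne', hq⟩
      exact ⟨hq, lt_of_le_of_ne (B.le_max' q hq) hne'⟩
  have := h _ hmax
  rw [hfe, Finset.card_erase_of_mem hmax] at this
  omega

lemma level_card : ∀ (m : ℕ) (T : Finset ℕ) (f : ℕ → ℕ) (r : ℕ),
    (∀ q ∈ T, f q ≤ m) →
    (∀ q ∈ T, (T.filter (fun q' => q' < q ∧ f q' ≤ f q)).card ≤ r) →
    T.card ≤ (m + 1) * (r + 1) := by
  intro m
  induction m with
  | zero =>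
    intro T f r hm h
    have h' : ∀ q ∈ T, (T.filter (· < q)).card ≤ r := by
      intro q hq
      refine le_trans (Finset.card_le_card ?_) (h q hq)
      intro q' hq'
      simp only [Finset.mem_filter] at hq' ⊢
      exact ⟨hq'.1, hq'.2, by have := hm q' hq'.1; omega⟩
    simpa using card_le_pred h'
  | succ m ih =>
    intro T f r hm h
    have hsplit : T = T.filter (fun q => f q ≤ m) ∪ T.filter (fun q => f q = m + 1) := by
      ext q
      simp only [Finset.mem_union, Finset.mem_filter]
      constructor
      · intro hq; have := hm q hq; by_cases hfq : f q ≤ m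
        · exact Or.inl ⟨hq, hfq⟩
        · exact Or.inr ⟨hq, by omega⟩
      · rintro (⟨hq, _⟩ | ⟨hq, _⟩) <;> exact hq
    have hA : (T.filter (fun q => f q ≤ m)).card ≤ (m + 1) * (r + 1) := by
      refine ih _ f r (fun q hq => (Finset.mem_filter.mp hq).2) ?_
      intro q hq
      refine le_trans (Finset.card_le_card ?_) (h q (Finset.mem_filter.mp hq).1)
      intro q' hq'
      simp only [Finset.mem_filter] at hq' ⊢
      exact ⟨hq'.1.1, hq'.2⟩
    have hB : (T.filter (fun q => f q = m + 1)).card ≤ r + 1 := by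
      refine card_le_pred ?_
      intro q hq
      have hq' := Finset.mem_filter.mp hq
      refine le_trans (Finset.card_le_card ?_) (h q hq'.1)
      intro q'' hq''
      simp only [Finset.mem_filter] at hq'' ⊢
      exact ⟨hq''.1.1, hq''.2, by omega⟩
    calc T.card ≤ (T.filter (fun q => f q ≤ m)).card + (T.filter (fun q => f q = m + 1)).card := by
          conv_lhs => rw [hsplit]
          exact Finset.card_union_le _ _
      _ ≤ (m + 1) * (r + 1) + (r + 1) := by omega
      _ = (m + 1 + 1) * (r + 1) := by ring

lemma countP_split {α : Type*} (l : List α) (p q : α → Bool) (hpq : ∀ a ∈ l, q a = true → p a = true) :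
    l.countP p = l.countP q + l.countP (fun a => p a && !q a) := by
  induction l with
  | nil => simp
  | cons a l ih =>
    have ih' := ih (fun a ha => hpq a (List.mem_cons_of_mem _ ha))
    by_cases hq : q a
    · have hp : p a = true := hpq a List.mem_cons_self hq
      simp [List.countP_cons, hq, hp, ih']
      try omega
    · by_cases hp : p a <;>
      · simp [List.countP_cons, hq, hp, ih']
        try omega

lemma countP_range (M : ℕ) (p : ℕ → Bool) :
    (List.range M).countP p = ((Finset.range M).filter (fun j => p j = true)).card := by
  induction M with
  | zero => simp
  | succ M ih =>
    rw [List.range_succ, List.countP_append, Finset.range_add_one, Finset.filter_insert]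
    by_cases h : p M = true
    · rw [if_pos h, Finset.card_insert_of_notMem (by simp)]
      simp [List.countP_cons, h, ih]
      try omega
    · rw [if_neg h]
      simp [List.countP_cons, h, ih]
      try omega

lemma sorted_index_iff {l : List ℝ} (hs : l.Pairwise (· ≤ ·)) {p : ℝ → Bool}
    (hp : ∀ a b : ℝ, a ≤ b → p b = true → p a = true) {j : ℕ} (hj : j < l.length) :
    p l[j] = true ↔ j + 1 ≤ l.countP p := by
  have hpair := List.pairwise_iff_getElem.mp hs
  constructor
  · intro hpj
    have hsplit : l.countP p = (l.take (j+1)).countP p + (l.drop (j+1)).countP p := by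
      rw [← List.countP_append, List.take_append_drop]
    have htake : (l.take (j+1)).countP p = j + 1 := by
      have hlen : (l.take (j+1)).length = j + 1 := by
        rw [List.length_take]; omega
      have hall : ∀ a ∈ l.take (j+1), p a = true := by
        intro a ha
        obtain ⟨i, hi, rfl⟩ := List.mem_iff_getElem.mp ha
        rw [List.getElem_take]
        have hij : i < j + 1 := by rw [hlen] at hi; exact hi
        rcases Nat.lt_or_ge i j with h' | h'
        · exact hp _ _ (hpair i j (by omega) hj h') hpj
        · have : i = j := by omega
          subst this; exact hpj
      have := List.countP_eq_length.mpr hall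
      omega
    omega
  · intro hcount
    by_contra hpj
    have hsplit : l.countP p = (l.take j).countP p + (l.drop j).countP p := by
      rw [← List.countP_append, List.take_append_drop]
    have hdrop : (l.drop j).countP p = 0 := by
      rw [List.countP_eq_zero]
      intro a ha
      obtain ⟨i, hi, rfl⟩ := List.mem_iff_getElem.mp ha
      rw [List.getElem_drop]
      intro hcon
      rw [List.length_drop] at hi
      rcases Nat.eq_or_lt_of_le (Nat.le_add_right j i) with h' | h'
      · apply hpj
        have : i = 0 := by omega
        subst this
        simpa using hcon
      · exact hpj (hp _ _ (hpair j (j+i) hj (by omega) h') hcon)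
    have : l.countP p ≤ j := by
      have := List.countP_le_length (p := p) (l := l.take j)
      rw [List.length_take] at this
      omega
    omega

end SCIA


section Knot
variable {k : ℕ} (K : KnotSeq k)

/-- The unsorted base list of knots of `𝒯_n`. -/
noncomputable def kbase (n : ℕ) : List ℝ :=
  List.replicate k (0:ℝ) ++ List.replicate k (1:ℝ) ++
    ((List.range (n-1)).map (fun j => K.t (j+2)))

lemma plist_perm (n : ℕ) : (K.plist n).Perm (kbase K n) :=
  List.mergeSort_perm _ _

/-- Number of knots of `𝒯_n` that are `≤ x`. -/
noncomputable def Fc (n : ℕ) (x : ℝ) : ℕ := (K.plist n).countP (fun y => decide (y ≤ x))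
/-- Number of knots of `𝒯_n` that are `< x`. -/
noncomputable def Gc (n : ℕ) (x : ℝ) : ℕ := (K.plist n).countP (fun y => decide (y < x))

lemma length_plist (n : ℕ) (hn : 1 ≤ n) : (K.plist n).length = n + 2*k - 1 := by
  unfold KnotSeq.plist
  rw [List.length_mergeSort]
  simp only [List.length_append, List.length_replicate, List.length_map, List.length_range]
  omega

lemma sorted_plist (n : ℕ) : (K.plist n).Pairwise (· ≤ ·) := by
  have h := List.pairwise_mergeSort (le := fun a b : ℝ => decide (a ≤ b))
    (fun a b c hab hbc => by
      simp only [decide_eq_true_eq] at *; exact le_trans hab hbc)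
    (fun a b => by
      simp only [Bool.or_eq_true, decide_eq_true_eq]; exact le_total a b)
    (kbase K n)
  unfold KnotSeq.plist
  unfold kbase at h
  exact h.imp (fun h' => by simpa using h')

lemma countP_plist (n : ℕ) (p : ℝ → Bool) :
    (K.plist n).countP p
      = (if p 0 = true then k else 0) + (if p 1 = true then k else 0)
        + (List.range (n-1)).countP (fun j => p (K.t (j+2))) := by
  rw [(plist_perm K n).countP_eq]
  unfold kbase
  rw [List.countP_append, List.countP_append, List.countP_map,
    List.countP_replicate, List.countP_replicate]
  rfl

lemma Fc_le_length (n : ℕ) (hn : 1 ≤ n) (x : ℝ) : Fc K n x ≤ n + 2*k - 1 := by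
  rw [← length_plist K n hn]; exact List.countP_le_length

lemma Gc_le_Fc (n : ℕ) (x : ℝ) : Gc K n x ≤ Fc K n x :=
  List.countP_mono_left (fun y _ h => by
    simp only [decide_eq_true_eq] at *; exact le_of_lt h)

lemma Fc_mono (n : ℕ) {x y : ℝ} (h : x ≤ y) : Fc K n x ≤ Fc K n y :=
  List.countP_mono_left (fun z _ hz => by
    simp only [decide_eq_true_eq] at *; exact le_trans hz h)

lemma Gc_mono (n : ℕ) {x y : ℝ} (h : x ≤ y) : Gc K n x ≤ Gc K n y :=
  List.countP_mono_left (fun z _ hz => by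
    simp only [decide_eq_true_eq] at *; exact lt_of_lt_of_le hz h)

lemma Fc_le_Gc_of_lt (n : ℕ) {x y : ℝ} (h : x < y) : Fc K n x ≤ Gc K n y :=
  List.countP_mono_left (fun z _ hz => by
    simp only [decide_eq_true_eq] at *; exact lt_of_le_of_lt hz h)

lemma tau_le_iff {n idx : ℕ} (hn : 1 ≤ n) (h1 : 1 ≤ idx) (h2 : idx ≤ n + 2*k - 1) (x : ℝ) :
    K.τ n idx ≤ x ↔ idx ≤ Fc K n x := by
  have hlen : idx - 1 < (K.plist n).length := by rw [length_plist K n hn]; omega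
  have hτ : K.τ n idx = (K.plist n)[idx - 1] := List.getD_eq_getElem _ _ hlen
  rw [hτ]
  have := SCIA.sorted_index_iff (sorted_plist K n)
    (p := fun y => decide (y ≤ x))
    (fun a b hab hb => by simp only [decide_eq_true_eq] at *; exact le_trans hab hb) hlen
  simp only [decide_eq_true_eq] at this
  rw [this]
  unfold Fc
  omega

lemma tau_lt_iff {n idx : ℕ} (hn : 1 ≤ n) (h1 : 1 ≤ idx) (h2 : idx ≤ n + 2*k - 1) (x : ℝ) :
    K.τ n idx < x ↔ idx ≤ Gc K n x := by
  have hlen : idx - 1 < (K.plist n).length := by rw [length_plist K n hn]; omega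
  have hτ : K.τ n idx = (K.plist n)[idx - 1] := List.getD_eq_getElem _ _ hlen
  rw [hτ]
  have := SCIA.sorted_index_iff (sorted_plist K n)
    (p := fun y => decide (y < x))
    (fun a b hab hb => by simp only [decide_eq_true_eq] at *; exact lt_of_le_of_lt hab hb) hlen
  simp only [decide_eq_true_eq] at this
  rw [this]
  unfold Gc
  omega

lemma tau_mono {n idx idx' : ℕ} (hn : 1 ≤ n) (h1 : 1 ≤ idx) (hle : idx ≤ idx')
    (h2 : idx' ≤ n + 2*k - 1) : K.τ n idx ≤ K.τ n idx' := by
  have hF : idx' ≤ Fc K n (K.τ n idx') := (tau_le_iff K hn (by omega) h2 _).mp le_rfl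
  exact (tau_le_iff K hn h1 (by omega) _).mpr (by omega)

end Knot

section Knot2
variable {k : ℕ} (K : KnotSeq k)

lemma ncard_eq_countP (n : ℕ) (hn : 2 ≤ n) (P : ℝ → Prop) :
    ({j | 2 ≤ j ∧ j ≤ n ∧ P (K.t j)} : Set ℕ).ncard
      = (List.range (n-1)).countP (fun j => decide (P (K.t (j+2)))) := by
  classical
  rw [SCIA.countP_range]
  have h1 : ({j | 2 ≤ j ∧ j ≤ n ∧ P (K.t j)} : Set ℕ)
      = ↑(((Finset.range (n-1)).filter
          (fun j => decide (P (K.t (j+2))) = true)).image (· + 2)) := by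
    ext j
    simp only [Set.mem_setOf_eq, Finset.coe_image, Set.mem_image, Finset.mem_coe,
      Finset.mem_filter, Finset.mem_range, decide_eq_true_eq]
    constructor
    · rintro ⟨h2, hn', hP⟩
      refine ⟨j - 2, ⟨by omega, ?_⟩, by omega⟩
      rw [Nat.sub_add_cancel h2]; exact hP
    · rintro ⟨i, ⟨hi, hP⟩, rfl⟩
      exact ⟨by omega, by omega, hP⟩
  rw [h1, Set.ncard_coe_finset,
    Finset.card_image_of_injective _ (fun a b hab => by omega)]

lemma Fc_t_eq (n : ℕ) (hn : 2 ≤ n) : Fc K n (K.t n) = K.i0 n := by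
  have ht := K.mem_Ioo n hn
  unfold Fc KnotSeq.i0
  rw [countP_plist]
  rw [if_pos (by simp only [decide_eq_true_eq]; exact le_of_lt ht.1), if_neg (by simp only [decide_eq_true_eq]; exact not_le.mpr ht.2)]
  rw [ncard_eq_countP K n hn (fun y => y < K.t n),
      ncard_eq_countP K n hn (fun y => y = K.t n)]
  have hsplit := SCIA.countP_split (List.range (n-1))
    (fun j => decide (K.t (j+2) ≤ K.t n)) (fun j => decide (K.t (j+2) < K.t n))
    (fun a _ h => by simp only [decide_eq_true_eq] at *; exact le_of_lt h)
  have hcongr : (List.range (n-1)).countP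
      (fun a => decide (K.t (a+2) ≤ K.t n) && !decide (K.t (a+2) < K.t n))
      = (List.range (n-1)).countP (fun j => decide (K.t (j+2) = K.t n)) := by
    apply List.countP_congr
    intro x _
    simp only [Bool.and_eq_true, Bool.not_eq_true', decide_eq_true_eq, decide_eq_false_iff_not]
    constructor
    · rintro ⟨h1, h2⟩; exact le_antisymm h1 (not_lt.mp h2)
    · intro h; exact ⟨le_of_eq h, by rw [h]; exact lt_irrefl _⟩
  beta_reduce at hsplit
  omega

lemma i0_lb (n : ℕ) (hn : 2 ≤ n) : k + 1 ≤ K.i0 n := by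
  unfold KnotSeq.i0
  have hfin : ({j | 2 ≤ j ∧ j ≤ n ∧ K.t j = K.t n} : Set ℕ).Finite :=
    Set.Finite.subset (Set.finite_Icc 2 n) (fun j hj => by
      simp only [Set.mem_setOf_eq] at hj; simp [Set.mem_Icc]; omega)
  have hne : ({j | 2 ≤ j ∧ j ≤ n ∧ K.t j = K.t n} : Set ℕ).Nonempty :=
    ⟨n, ⟨hn, le_rfl, rfl⟩⟩
  have := (Set.ncard_pos hfin).mpr hne
  omega

lemma B_le_k (n : ℕ) (hn : 2 ≤ n) :
    ({j | 2 ≤ j ∧ j ≤ n ∧ K.t j = K.t n} : Set ℕ).ncard ≤ k := by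
  refine le_trans (Set.ncard_le_ncard ?_ (K.mult_finite (K.t n))) (K.mult_le (K.t n))
  intro j hj
  simp only [Set.mem_setOf_eq] at *
  exact ⟨hj.1, hj.2.2⟩

lemma i0_ub (n : ℕ) (hn : 2 ≤ n) : K.i0 n ≤ k + n - 1 := by
  unfold KnotSeq.i0
  have hA : ({j | 2 ≤ j ∧ j ≤ n ∧ K.t j < K.t n} : Set ℕ).Finite :=
    Set.Finite.subset (Set.finite_Icc 2 n) (fun j hj => by
      simp only [Set.mem_setOf_eq] at hj; simp [Set.mem_Icc]; omega)
  have hB : ({j | 2 ≤ j ∧ j ≤ n ∧ K.t j = K.t n} : Set ℕ).Finite :=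
    Set.Finite.subset (Set.finite_Icc 2 n) (fun j hj => by
      simp only [Set.mem_setOf_eq] at hj; simp [Set.mem_Icc]; omega)
  have hdisj : Disjoint ({j | 2 ≤ j ∧ j ≤ n ∧ K.t j < K.t n} : Set ℕ)
      ({j | 2 ≤ j ∧ j ≤ n ∧ K.t j = K.t n} : Set ℕ) := by
    rw [Set.disjoint_left]
    intro j hj hj'
    simp only [Set.mem_setOf_eq] at *
    rw [hj'.2.2] at hj
    exact lt_irrefl _ hj.2.2
  have hu := Set.ncard_union_eq hdisj hA hB
  have hsub : ({j | 2 ≤ j ∧ j ≤ n ∧ K.t j < K.t n} : Set ℕ)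
      ∪ ({j | 2 ≤ j ∧ j ≤ n ∧ K.t j = K.t n} : Set ℕ) ⊆ Set.Icc 2 n := by
    rintro j (hj | hj) <;> simp only [Set.mem_setOf_eq] at hj <;>
      simp [Set.mem_Icc] <;> omega
  have hle := Set.ncard_le_ncard hsub (Set.finite_Icc 2 n)
  have : (Set.Icc 2 n).ncard = n - 1 := by
    rw [← Finset.coe_Icc, Set.ncard_coe_finset, Nat.card_Icc]
    omega
  omega

lemma Gc_t_lt_i0 (n : ℕ) (hn : 2 ≤ n) : Gc K n (K.t n) < K.i0 n := by
  have ht := K.mem_Ioo n hn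
  have hlb := i0_lb K n hn
  unfold Gc KnotSeq.i0
  rw [countP_plist]
  rw [if_pos (by simp [ht.1]), if_neg (by simp; exact le_of_lt ht.2)]
  rw [ncard_eq_countP K n hn (fun y => y < K.t n)]
  have hfin : ({j | 2 ≤ j ∧ j ≤ n ∧ K.t j = K.t n} : Set ℕ).Finite :=
    Set.Finite.subset (Set.finite_Icc 2 n) (fun j hj => by
      simp only [Set.mem_setOf_eq] at hj; simp [Set.mem_Icc]; omega)
  have hne : ({j | 2 ≤ j ∧ j ≤ n ∧ K.t j = K.t n} : Set ℕ).Nonempty :=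
    ⟨n, ⟨hn, le_rfl, rfl⟩⟩
  have := (Set.ncard_pos hfin).mpr hne
  omega

end Knot2

section Knot3
variable {k : ℕ} (K : KnotSeq k)

lemma countP_plist_add {n n' : ℕ} (hn : 2 ≤ n) (hle : n ≤ n') (p : ℝ → Bool) :
    (K.plist n').countP p
      = (K.plist n).countP p + (List.range (n' - n)).countP (fun j => p (K.t (n + 1 + j))) := by
  rw [countP_plist, countP_plist]
  have h : n' - 1 = (n - 1) + (n' - n) := by omega
  rw [h, List.range_add, List.countP_append, List.countP_map]
  have : (List.range (n' - n)).countP ((fun j => p (K.t (j+2))) ∘ (fun x => (n-1) + x))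
      = (List.range (n' - n)).countP (fun j => p (K.t (n + 1 + j))) := by
    apply List.countP_congr
    intro x _
    have : (n - 1) + x + 2 = n + 1 + x := by omega
    simp only [Function.comp_apply, this]
  omega

/-- The main "frozen interval" lemma. -/
lemma frozen {n n' : ℕ} (hn : 2 ≤ n) (hle : n ≤ n') {L R : ℝ} (hLR : L ≤ R)
    (h1 : Fc K n R = Gc K n L + k) (h2 : Fc K n' R = Gc K n' L + k) :
    (∀ j, n < j → j ≤ n' → K.t j ∉ Set.Icc L R) ∧
    ∃ c, ∀ x, L ≤ x → x ≤ R → Fc K n' x = Fc K n x + c ∧ Gc K n' x = Gc K n x + c := by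
  have hF := countP_plist_add K hn hle (fun y => decide (y ≤ R))
  have hG := countP_plist_add K hn hle (fun y => decide (y < L))
  change Fc K n' R = Fc K n R + _ at hF
  change Gc K n' L = Gc K n L + _ at hG
  have hsplit := SCIA.countP_split (List.range (n' - n))
    (fun j => decide (K.t (n + 1 + j) ≤ R)) (fun j => decide (K.t (n + 1 + j) < L))
    (fun a _ h => by
      simp only [decide_eq_true_eq] at *; exact le_trans (le_of_lt h) hLR)
  have hzero : (List.range (n' - n)).countP
      (fun a => decide (K.t (n + 1 + a) ≤ R) && !decide (K.t (n + 1 + a) < L)) = 0 := by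
    beta_reduce at hsplit
    omega
  rw [List.countP_eq_zero] at hzero
  have hout : ∀ j, n < j → j ≤ n' → K.t j ∉ Set.Icc L R := by
    intro j hj1 hj2 hmem
    rw [Set.mem_Icc] at hmem
    have hjr : j - n - 1 ∈ List.range (n' - n) := by
      rw [List.mem_range]; omega
    have := hzero _ hjr
    have hj : n + 1 + (j - n - 1) = j := by omega
    rw [hj] at this
    simp only [Bool.and_eq_true, Bool.not_eq_true', decide_eq_true_eq,
      decide_eq_false_iff_not, not_and, not_not] at this
    have := this hmem.2
    exact absurd hmem.1 (not_le.mpr this)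
  refine ⟨hout, (List.range (n' - n)).countP (fun j => decide (K.t (n + 1 + j) < L)), ?_⟩
  intro x hLx hxR
  have hFx := countP_plist_add K hn hle (fun y => decide (y ≤ x))
  have hGx := countP_plist_add K hn hle (fun y => decide (y < x))
  change Fc K n' x = Fc K n x + _ at hFx
  change Gc K n' x = Gc K n x + _ at hGx
  have hcF : (List.range (n' - n)).countP (fun j => decide (K.t (n + 1 + j) ≤ x))
      = (List.range (n' - n)).countP (fun j => decide (K.t (n + 1 + j) < L)) := by
    apply List.countP_congr
    intro j hj
    rw [List.mem_range] at hj
    have hnot := hout (n + 1 + j) (by omega) (by omega)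
    rw [Set.mem_Icc, not_and_or, not_le, not_le] at hnot
    simp only [decide_eq_true_eq]
    rcases hnot with h | h
    · constructor <;> intro <;> [exact h; exact le_trans (le_of_lt h) hLx]
    · constructor <;> intro h' <;> [exact absurd h' (not_le.mpr (lt_of_le_of_lt hxR h));
        exact absurd h' (not_lt.mpr (le_trans hLR (le_of_lt h)))]
  have hcG : (List.range (n' - n)).countP (fun j => decide (K.t (n + 1 + j) < x))
      = (List.range (n' - n)).countP (fun j => decide (K.t (n + 1 + j) < L)) := by
    apply List.countP_congr
    intro j hj
    rw [List.mem_range] at hj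
    have hnot := hout (n + 1 + j) (by omega) (by omega)
    rw [Set.mem_Icc, not_and_or, not_le, not_le] at hnot
    simp only [decide_eq_true_eq]
    rcases hnot with h | h
    · constructor <;> intro <;> [exact h; exact lt_of_lt_of_le h hLx]
    · constructor <;> intro h' <;> [exact absurd h' (not_lt.mpr (le_trans hxR (le_of_lt h)));
        exact absurd h' (not_lt.mpr (le_trans hLR (le_of_lt h)))]
  omega

lemma window_count {n : ℕ} {a b : ℝ} (hab : a < b) :
    Fc K n a + (K.plist n).countP (fun y => decide (a < y ∧ y < b)) = Gc K n b := by
  have hsplit := SCIA.countP_split (K.plist n)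
    (fun y => decide (y < b)) (fun y => decide (y ≤ a))
    (fun y _ h => by simp only [decide_eq_true_eq] at *; exact lt_of_le_of_lt h hab)
  have hcongr : (K.plist n).countP (fun y => decide (y < b) && !decide (y ≤ a))
      = (K.plist n).countP (fun y => decide (a < y ∧ y < b)) := by
    apply List.countP_congr
    intro y _
    simp only [Bool.and_eq_true, Bool.not_eq_true', decide_eq_true_eq, decide_eq_false_iff_not,
      not_le]
    tauto
  unfold Fc Gc
  beta_reduce at hsplit
  omega

/-- The card-filter condition in the theorem, translated to counts. -/
lemma card_filter_eq {n : ℕ} (hn : 2 ≤ n) (hk : 2 ≤ k) {L R : ℝ} (hLR : L ≤ R)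
    (h : ((Finset.Icc 1 (n+2*k-1)).filter (fun idx => K.τ n idx ∈ Set.Icc L R)).card = k) :
    Fc K n R = Gc K n L + k := by
  have hn1 : (1:ℕ) ≤ n := by omega
  have hset : (Finset.Icc 1 (n+2*k-1)).filter (fun idx => K.τ n idx ∈ Set.Icc L R)
      = Finset.Icc (Gc K n L + 1) (Fc K n R) := by
    ext idx
    simp only [Finset.mem_filter, Finset.mem_Icc, Set.mem_Icc]
    constructor
    · rintro ⟨⟨hi1, hi2⟩, hL, hR⟩
      have h1 := (tau_le_iff K hn1 hi1 hi2 R).mp hR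
      have h2 : ¬ (idx ≤ Gc K n L) := fun hcon =>
        absurd ((tau_lt_iff K hn1 hi1 hi2 L).mpr hcon) (not_lt.mpr hL)
      omega
    · rintro ⟨hi1, hi2⟩
      have hFle := Fc_le_length K n hn1 R
      have hrange : 1 ≤ idx ∧ idx ≤ n + 2*k - 1 := by omega
      have hR := (tau_le_iff K hn1 hrange.1 hrange.2 R).mpr (by omega)
      have hL : ¬ (K.τ n idx < L) := fun hcon => by
        have := (tau_lt_iff K hn1 hrange.1 hrange.2 L).mp hcon
        omega
      exact ⟨⟨hrange.1, hrange.2⟩, not_lt.mp hL, hR⟩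
  rw [hset, Nat.card_Icc] at h
  have := Gc_le_Fc K n L
  have h2 : Gc K n L ≤ Gc K n R := Gc_mono K n hLR
  omega

/-- Counting old insertions below list entries. -/
lemma card_olds_le {n : ℕ} (hn : 2 ≤ n) (T : Finset ℕ) (hT : ∀ q ∈ T, 2 ≤ q)
    (p : ℝ → Bool) :
    (T.filter (fun q => q < n ∧ p (K.t q) = true)).card
      ≤ (K.plist n).countP p := by
  have h1 : (T.filter (fun q => q < n ∧ p (K.t q) = true)).card
      ≤ ((Finset.range (n-1)).filter (fun j => p (K.t (j+2)) = true)).card := by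
    apply Finset.card_le_card_of_injOn (fun q => q - 2)
    · intro q hq
      simp only [Finset.mem_coe, Finset.mem_filter, Finset.mem_range] at *
      have h2 := hT q hq.1
      refine ⟨by omega, ?_⟩
      have : q - 2 + 2 = q := by omega
      rw [this]; exact hq.2.2
    · intro q1 h1 q2 h2 he
      simp only [Finset.coe_filter, Set.mem_setOf_eq] at h1 h2
      have := hT q1 h1.1
      have := hT q2 h2.1
      beta_reduce at he
      omega
  rw [← SCIA.countP_range] at h1
  refine le_trans h1 ?_
  rw [countP_plist]
  omega

end Knot3

section Knot4
variable {k : ℕ}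

/-- Facts about a single occurrence of characteristic interval `[u,v]` at level `n`. -/
structure Occ (K : KnotSeq k) (n : ℕ) (u v : ℝ) : Prop where
  win_hi : K.t n ≤ u + k * (v - u)
  win_lo : v - k * (v - u) ≤ K.t n
  Fv : K.i0 n + 1 ≤ Fc K n v + k
  Gz : Gc K n (K.t n + (v-u)/2) + 1 ≤ K.i0 n + k
  Gu : Gc K n u + 2 ≤ K.i0 n + k
  Fy : K.i0 n ≤ Fc K n (K.t n - (v-u)/2) + k
  entu : Gc K n u + 1 ≤ Fc K n u
  entv : Gc K n v + 1 ≤ Fc K n v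
  consec : Gc K n v ≤ Fc K n u

lemma occ (K : KnotSeq k) {n : ℕ} (hn : 2 ≤ n) {Jn : Set ℝ} (hJ : K.IsCharInterval n Jn)
    {u v : ℝ} (hJn : Jn = Set.Icc u v) (huv : u < v) : Occ K n u v := by
  obtain ⟨j0, hj0Λ1, l, hlk, hJeq, hmax⟩ := hJ
  have hn1 : (1:ℕ) ≤ n := by omega
  set i0 := K.i0 n with hi0def
  have hj0Λ0 : j0 ∈ K.Λ0 n := (Finset.mem_filter.mp hj0Λ1).1
  have hj0mem := Finset.mem_filter.mp hj0Λ0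
  have hj0Icc := Finset.mem_Icc.mp hj0mem.1
  have hΛ : ∀ l' ∈ Finset.Icc (i0 - k) i0, K.len n j0 k ≤ 2 * K.len n l' k := hj0mem.2
  have hi0lb : k + 1 ≤ i0 := i0_lb K n hn
  have hi0ub : i0 ≤ k + n - 1 := i0_ub K n hn
  have hkpos : 1 ≤ k := le_trans (by omega) K.two_le
  -- index bounds
  have hNbd : i0 + k ≤ n + 2*k - 1 := by omega
  have hj0up : i0 ≤ j0 + k := by omega
  have hj01 : 1 ≤ j0 := by omega
  set a := j0 + l with hadef
  have hak : a + 1 ≤ j0 + k := by omega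
  -- endpoint identification
  have hta : K.τ n a ≤ K.τ n (a+1) := tau_mono K hn1 (by omega) (by omega) (by omega)
  have hIcc : Set.Icc (K.τ n a) (K.τ n (a+1)) = Set.Icc u v := by rw [← hJeq, hJn]
  have hua : K.τ n a = u ∧ K.τ n (a+1) = v := by
    have h1 : u ∈ Set.Icc (K.τ n a) (K.τ n (a+1)) := by
      rw [hIcc]; exact Set.mem_Icc.mpr ⟨le_rfl, le_of_lt huv⟩
    have h2 : v ∈ Set.Icc (K.τ n a) (K.τ n (a+1)) := by
      rw [hIcc]; exact Set.mem_Icc.mpr ⟨le_of_lt huv, le_rfl⟩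
    have h3 : K.τ n a ∈ Set.Icc u v := by
      rw [← hIcc]; exact Set.mem_Icc.mpr ⟨le_rfl, hta⟩
    have h4 : K.τ n (a+1) ∈ Set.Icc u v := by
      rw [← hIcc]; exact Set.mem_Icc.mpr ⟨hta, le_rfl⟩
    rw [Set.mem_Icc] at h1 h2 h3 h4
    constructor <;> linarith [h1.1, h2.2, h3.1, h4.2]
  obtain ⟨hu, hv⟩ := hua
  -- τ i0 = t n
  have hFt : Fc K n (K.t n) = i0 := Fc_t_eq K n hn
  have hGt : Gc K n (K.t n) < i0 := Gc_t_lt_i0 K n hn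
  have hti0 : K.τ n i0 = K.t n := by
    have h1 : K.τ n i0 ≤ K.t n :=
      (tau_le_iff K hn1 (by omega) (by omega) _).mpr (by omega)
    have h2 : ¬ (K.τ n i0 < K.t n) := fun hcon => by
      have := (tau_lt_iff K hn1 (by omega) (by omega) _).mp hcon
      omega
    linarith [not_lt.mp h2]
  -- support bounds
  have hsum : ∑ l' ∈ Finset.range k, (K.τ n (j0 + (l'+1)) - K.τ n (j0 + l'))
      = K.τ n (j0 + k) - K.τ n j0 := by
    have := Finset.sum_range_sub (f := fun l' => K.τ n (j0 + l')) k
    simpa using this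
  have hterm : ∀ l' ∈ Finset.range k, K.τ n (j0 + (l'+1)) - K.τ n (j0 + l') ≤ v - u := by
    intro l' hl'
    rw [Finset.mem_range] at hl'
    have := hmax l' hl'
    unfold KnotSeq.len at this
    rw [hu, hv] at this
    have harr : j0 + l' + 1 = j0 + (l'+1) := by omega
    rw [harr] at this
    exact this
  have hsupp_ub : K.τ n (j0 + k) - K.τ n j0 ≤ k * (v - u) := by
    rw [← hsum]
    calc ∑ l' ∈ Finset.range k, (K.τ n (j0 + (l'+1)) - K.τ n (j0 + l'))
        ≤ ∑ _l' ∈ Finset.range k, (v - u) := Finset.sum_le_sum hterm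
      _ = k * (v - u) := by rw [Finset.sum_const, Finset.card_range, nsmul_eq_mul]
  have hj0a : K.τ n j0 ≤ u := by rw [← hu]; exact tau_mono K hn1 (by omega) (by omega) (by omega)
  have hav : v ≤ K.τ n (j0 + k) := by rw [← hv]; exact tau_mono K hn1 (by omega) (by omega) (by omega)
  have htlo : K.τ n j0 ≤ K.t n := by
    rw [← hti0]; exact tau_mono K hn1 (by omega) (by omega) (by omega)
  have hthi : K.t n ≤ K.τ n (j0 + k) := by
    rw [← hti0]; exact tau_mono K hn1 (by omega) (by omega) (by omega)
  -- Λ0 inequalities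
  have hsupp_lb : v - u ≤ K.len n j0 k := by
    unfold KnotSeq.len; linarith
  have hL1 : K.len n j0 k ≤ 2 * K.len n i0 k :=
    hΛ i0 (Finset.mem_Icc.mpr ⟨by omega, le_rfl⟩)
  have hL2 : K.len n j0 k ≤ 2 * K.len n (i0 - k) k :=
    hΛ (i0 - k) (Finset.mem_Icc.mpr ⟨le_rfl, by omega⟩)
  have hlen1 : K.τ n (i0 + k) - K.t n ≥ (v - u)/2 := by
    unfold KnotSeq.len at hL1
    rw [hti0] at hL1
    linarith
  have hlen2 : K.t n - K.τ n (i0 - k) ≥ (v - u)/2 := by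
    unfold KnotSeq.len at hL2
    have harr : i0 - k + k = i0 := by omega
    rw [harr, hti0] at hL2
    linarith
  refine ⟨?_, ?_, ?_, ?_, ?_, ?_, ?_, ?_, ?_⟩
  · linarith
  · linarith
  · -- Fv
    have : a + 1 ≤ Fc K n v := (tau_le_iff K hn1 (by omega) (by omega) v).mp (le_of_eq hv)
    omega
  · -- Gz
    have h1 : ¬ (K.τ n (i0 + k) < K.t n + (v-u)/2) := by linarith
    have h2 : ¬ (i0 + k ≤ Gc K n (K.t n + (v-u)/2)) := fun hcon =>
      h1 ((tau_lt_iff K hn1 (by omega) (by omega) _).mpr hcon)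
    omega
  · -- Gu
    have h1 : ¬ (K.τ n a < u) := by rw [hu]; exact lt_irrefl u
    have h2 : ¬ (a ≤ Gc K n u) := fun hcon =>
      h1 ((tau_lt_iff K hn1 (by omega) (by omega) _).mpr hcon)
    omega
  · -- Fy
    have h1 : K.τ n (i0 - k) ≤ K.t n - (v-u)/2 := by linarith
    have h2 : i0 - k ≤ Fc K n (K.t n - (v-u)/2) :=
      (tau_le_iff K hn1 (by omega) (by omega) _).mp h1
    omega
  · -- entu
    have h1 : a ≤ Fc K n u := (tau_le_iff K hn1 (by omega) (by omega) u).mp (le_of_eq hu)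
    have h2 : ¬ (a ≤ Gc K n u) := fun hcon => by
      have := (tau_lt_iff K hn1 (by omega) (by omega) u).mpr hcon
      rw [hu] at this
      exact lt_irrefl u this
    omega
  · -- entv
    have h1 : a + 1 ≤ Fc K n v := (tau_le_iff K hn1 (by omega) (by omega) v).mp (le_of_eq hv)
    have h2 : ¬ (a + 1 ≤ Gc K n v) := fun hcon => by
      have := (tau_lt_iff K hn1 (by omega) (by omega) v).mpr hcon
      rw [hv] at this
      exact lt_irrefl v this
    omega
  · -- consec
    have h1 : a ≤ Fc K n u := (tau_le_iff K hn1 (by omega) (by omega) u).mp (le_of_eq hu)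
    have h2 : ¬ (a + 1 ≤ Gc K n v) := fun hcon => by
      have := (tau_lt_iff K hn1 (by omega) (by omega) v).mpr hcon
      rw [hv] at this
      exact lt_irrefl v this
    omega

end Knot4

section Knot5
variable {k : ℕ}

lemma side_card {T : Finset ℕ} {x : ℕ → ℝ} {w δ : ℝ} (hδ : 0 < δ) {m r : ℕ}
    (hwin : ∀ q ∈ T, w < x q ∧ x q ≤ w + m * (δ/2))
    (hcount : ∀ q ∈ T,
      (T.filter (fun q' => q' < q ∧ w < x q' ∧ x q' < x q + δ/2)).card ≤ r) :
    T.card ≤ (m+1) * (r+1) := by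
  have hδ2 : 0 < δ/2 := by linarith
  apply SCIA.level_card m T (fun q => ⌈(x q - w)/(δ/2)⌉₊) r
  · intro q hq
    show ⌈(x q - w)/(δ/2)⌉₊ ≤ m
    apply Nat.ceil_le.mpr
    rw [div_le_iff₀ hδ2]
    have := (hwin q hq).2
    linarith
  · intro q hq
    refine le_trans (Finset.card_le_card ?_) (hcount q hq)
    intro q' hq'
    simp only [Finset.mem_filter] at hq' ⊢
    obtain ⟨hq'T, hlt, hle⟩ := hq'
    have hle' : ⌈(x q' - w)/(δ/2)⌉₊ ≤ ⌈(x q - w)/(δ/2)⌉₊ := hle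
    refine ⟨hq'T, hlt, (hwin q' hq'T).1, ?_⟩
    have h1 : x q' - w ≤ (⌈(x q' - w)/(δ/2)⌉₊ : ℝ) * (δ/2) := by
      have hc := Nat.le_ceil ((x q' - w)/(δ/2))
      calc x q' - w = ((x q' - w)/(δ/2)) * (δ/2) := by field_simp
        _ ≤ (⌈(x q' - w)/(δ/2)⌉₊ : ℝ) * (δ/2) := by
          apply mul_le_mul_of_nonneg_right hc (le_of_lt hδ2)
    have hfq1 : 1 ≤ ⌈(x q - w)/(δ/2)⌉₊ := by
      apply Nat.ceil_pos.mpr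
      apply div_pos _ hδ2
      have := (hwin q hq).1
      linarith
    have hlt2 : ((⌈(x q - w)/(δ/2)⌉₊ - 1 : ℕ) : ℝ) < (x q - w)/(δ/2) :=
      Nat.lt_ceil.mp (by omega)
    rw [Nat.cast_sub hfq1] at hlt2
    push_cast at hlt2
    have h2 : ((⌈(x q - w)/(δ/2)⌉₊ : ℝ) - 1) * (δ/2) < x q - w := by
      calc ((⌈(x q - w)/(δ/2)⌉₊ : ℝ) - 1) * (δ/2)
          < ((x q - w)/(δ/2)) * (δ/2) := by
            apply mul_lt_mul_of_pos_right hlt2 hδ2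
        _ = x q - w := by field_simp
    have h3 : ((⌈(x q' - w)/(δ/2)⌉₊ : ℕ) : ℝ) ≤ ((⌈(x q - w)/(δ/2)⌉₊ : ℕ) : ℝ) := by
      exact_mod_cast hle'
    nlinarith [h1, h2, h3, le_of_lt hδ2]

lemma right_card (K : KnotSeq k) (hk : 2 ≤ k) {u v : ℝ} (huv : u < v)
    {R : ℝ} (hvR : v ≤ R) (T : Finset ℕ)
    (hT : ∀ q ∈ T, 2 ≤ q ∧ Occ K q u v ∧ R < K.t q) :
    T.card ≤ (2*k - 1) * (2*k - 1) := by
  have hδ : 0 < v - u := by linarith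
  have hcast : ((2*k - 2 : ℕ) : ℝ) = 2*(k:ℝ) - 2 := by
    have : (2:ℕ) ≤ 2*k := by omega
    push_cast [Nat.cast_sub this]
    ring
  have h := side_card (T := T) (x := K.t) (w := v) (δ := v - u) hδ (m := 2*k-2) (r := 2*k-2)
    ?_ ?_
  · calc T.card ≤ (2*k-2+1) * (2*k-2+1) := h
      _ = (2*k-1) * (2*k-1) := by congr 1 <;> omega
  · intro q hq
    obtain ⟨hq2, ho, hRq⟩ := hT q hq
    refine ⟨by linarith, ?_⟩
    have h1 := ho.win_hi
    rw [hcast]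
    nlinarith
  · intro q hq
    obtain ⟨hq2, ho, hRq⟩ := hT q hq
    have hb : v < K.t q + (v-u)/2 := by linarith
    have h2 := window_count K (n := q) hb
    have h1 := card_olds_le K hq2 T (fun q' hq' => (hT q' hq').1)
      (fun y => decide (v < y ∧ y < K.t q + (v-u)/2))
    have hsub : T.filter (fun q' => q' < q ∧ v < K.t q' ∧ K.t q' < K.t q + (v-u)/2)
        ⊆ T.filter (fun q' => q' < q ∧
            (fun y => decide (v < y ∧ y < K.t q + (v-u)/2)) (K.t q') = true) := by
      intro q' hq'
      simp only [Finset.mem_filter, decide_eq_true_eq] at hq' ⊢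
      exact ⟨hq'.1, hq'.2.1, hq'.2.2⟩
    have h3 := Finset.card_le_card hsub
    beta_reduce at h3 h1
    have h4 := ho.Fv
    have h5 := ho.Gz
    have := i0_lb K q hq2
    omega

lemma left_card (K : KnotSeq k) (hk : 2 ≤ k) {u v : ℝ} (huv : u < v)
    {L : ℝ} (hLu : L ≤ u) (T : Finset ℕ)
    (hT : ∀ q ∈ T, 2 ≤ q ∧ Occ K q u v ∧ K.t q < L) :
    T.card ≤ (2*k - 1) * (2*k - 1) := by
  have hδ : 0 < v - u := by linarith
  have hcast : ((2*k - 2 : ℕ) : ℝ) = 2*(k:ℝ) - 2 := by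
    have : (2:ℕ) ≤ 2*k := by omega
    push_cast [Nat.cast_sub this]
    ring
  have h := side_card (T := T) (x := fun q => - K.t q) (w := -u) (δ := v - u) hδ
    (m := 2*k-2) (r := 2*k-2) ?_ ?_
  · calc T.card ≤ (2*k-2+1) * (2*k-2+1) := h
      _ = (2*k-1) * (2*k-1) := by congr 1 <;> omega
  · intro q hq
    obtain ⟨hq2, ho, hLq⟩ := hT q hq
    beta_reduce
    refine ⟨by linarith, ?_⟩
    have h1 := ho.win_lo
    rw [hcast]
    nlinarith
  · intro q hq
    beta_reduce
    obtain ⟨hq2, ho, hLq⟩ := hT q hq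
    have hb : K.t q - (v-u)/2 < u := by linarith
    have h2 := window_count K (n := q) hb
    have h1 := card_olds_le K hq2 T (fun q' hq' => (hT q' hq').1)
      (fun y => decide (K.t q - (v-u)/2 < y ∧ y < u))
    have hsub : T.filter (fun q' => q' < q ∧ -u < -K.t q' ∧ -K.t q' < -K.t q + (v-u)/2)
        ⊆ T.filter (fun q' => q' < q ∧
            (fun y => decide (K.t q - (v-u)/2 < y ∧ y < u)) (K.t q') = true) := by
      intro q' hq'
      simp only [Finset.mem_filter, decide_eq_true_eq] at hq' ⊢
      exact ⟨hq'.1, hq'.2.1, by linarith [hq'.2.2.2], by linarith [hq'.2.2.1]⟩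
    have h3 := Finset.card_le_card hsub
    beta_reduce at h3 h1
    have h4 := ho.Gu
    have h5 := ho.Fy
    have := i0_lb K q hq2
    omega

end Knot5

section Knot6
variable {k : ℕ}

lemma pairs_eq_or_disjoint (K : KnotSeq k) {n n' : ℕ} (hn : 2 ≤ n) (hle : n ≤ n')
    {L R : ℝ} (hLR : L ≤ R)
    (h1 : Fc K n R = Gc K n L + k) (h2 : Fc K n' R = Gc K n' L + k)
    {u v u' v' : ℝ} (huv : u < v) (hu'v' : u' < v')
    (ho : Occ K n u v) (ho' : Occ K n' u' v')
    (hbd : L ≤ u ∧ v ≤ R) (hbd' : L ≤ u' ∧ v' ≤ R) :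
    (u = u' ∧ v = v') ∨ Disjoint (Set.Ioo u v) (Set.Ioo u' v') := by
  by_cases hd : Disjoint (Set.Ioo u v) (Set.Ioo u' v')
  · right; exact hd
  left
  rw [Set.not_disjoint_iff] at hd
  obtain ⟨x, hx1, hx2⟩ := hd
  rw [Set.mem_Ioo] at hx1 hx2
  obtain ⟨-, c, hc⟩ := frozen K hn hle hLR h1 h2
  have hcu := hc u hbd.1 (by linarith)
  have hcv := hc v (by linarith) hbd.2
  have hcu' := hc u' hbd'.1 (by linarith)
  have hcv' := hc v' (by linarith) hbd'.2
  have hconsec := ho.consec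
  have hentu := ho.entu
  have hentv := ho.entv
  have hconsec' := ho'.consec
  have hentu' := ho'.entu
  have hentv' := ho'.entv
  have huu : u = u' := by
    rcases lt_trichotomy u u' with h | h | h
    · exfalso
      have e1 : Fc K n u ≤ Gc K n u' := Fc_le_Gc_of_lt K n h
      have e2 : Fc K n u' ≤ Gc K n v := Fc_le_Gc_of_lt K n (by linarith)
      omega
    · exact h
    · exfalso
      have e1 : Fc K n' u' ≤ Gc K n' u := Fc_le_Gc_of_lt K n' h
      have e2 : Fc K n' u ≤ Gc K n' v' := Fc_le_Gc_of_lt K n' (by linarith)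
      omega
  refine ⟨huu, ?_⟩
  rcases lt_trichotomy v v' with h | h | h
  · exfalso
    have e1 : Fc K n' u' ≤ Gc K n' v := Fc_le_Gc_of_lt K n' (by rw [← huu]; linarith)
    have e2 : Fc K n' v ≤ Gc K n' v' := Fc_le_Gc_of_lt K n' h
    omega
  · exact h
  · exfalso
    have e1 : Fc K n u ≤ Gc K n v' := Fc_le_Gc_of_lt K n (by rw [huu]; linarith)
    have e2 : Fc K n v' ≤ Gc K n v := Fc_le_Gc_of_lt K n h
    omega

lemma sum_lengths_le (P : Finset (ℝ × ℝ)) (L R : ℝ) (hLR : L ≤ R)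
    (hsub : ∀ p ∈ P, Set.Ioo p.1 p.2 ⊆ Set.Ioo L R)
    (hdisj : (↑P : Set (ℝ × ℝ)).Pairwise
      (fun p q => Disjoint (Set.Ioo p.1 p.2) (Set.Ioo q.1 q.2))) :
    ∑ p ∈ P, (volume (Set.Ioo p.1 p.2)).toReal ≤ R - L := by
  have hmeas : ∀ p ∈ P, MeasurableSet (Set.Ioo p.1 p.2) := fun p _ => measurableSet_Ioo
  have h1 : ∑ p ∈ P, volume (Set.Ioo p.1 p.2) = volume (⋃ p ∈ P, Set.Ioo p.1 p.2) :=
    (measure_biUnion_finset hdisj hmeas).symm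
  have h2 : volume (⋃ p ∈ P, Set.Ioo p.1 p.2) ≤ volume (Set.Ioo L R) := by
    apply measure_mono
    exact Set.iUnion₂_subset hsub
  have h3 : ∑ p ∈ P, volume (Set.Ioo p.1 p.2) ≤ ENNReal.ofReal (R - L) := by
    rw [h1, ← Real.volume_Ioo]; exact h2
  have h4 : (∑ p ∈ P, volume (Set.Ioo p.1 p.2)).toReal
      = ∑ p ∈ P, (volume (Set.Ioo p.1 p.2)).toReal := by
    apply ENNReal.toReal_sum
    intro p _
    rw [Real.volume_Ioo]
    exact ENNReal.ofReal_ne_top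
  rw [← h4]
  calc (∑ p ∈ P, volume (Set.Ioo p.1 p.2)).toReal
      ≤ (ENNReal.ofReal (R - L)).toReal := by
        apply ENNReal.toReal_mono ENNReal.ofReal_ne_top h3
    _ = R - L := ENNReal.toReal_ofReal (by linarith)

end Knot6

/-- First half of Lemma 4.7: for a `(k-1)`-regular knot sequence and a span
`Δ = D_{m,i}^{(k-1)}` of `k` consecutive knots, the sum of `|J_n|` over those `n` for
which `Δ` contains exactly `k` knots of `𝒯_n` and `J_n ⊆ Δ` is at most `c_k |Δ|`. -/
theorem sum_charIntervals_inside (k : ℕ) (hk : 2 ≤ k) :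
    ∃ c : ℝ, 0 < c ∧
      ∀ (K : KnotSeq k) (γ : ℝ), 1 ≤ γ → K.Regular (k-1) γ →
      ∀ (J : ℕ → Set ℝ), (∀ n, 2 ≤ n → K.IsCharInterval n (J n)) →
      ∀ (m i : ℕ), 2 ≤ m → 2 ≤ i → i ≤ m + k - 1 →
        ∀ s : Finset ℕ,
          (∀ n ∈ s, 2 ≤ n ∧
            ((Finset.Icc 1 (n+2*k-1)).filter (fun idx =>
              K.τ n idx ∈ Set.Icc (K.τ m i) (K.τ m (i+(k-1))))).card = k ∧
            J n ⊆ Set.Icc (K.τ m i) (K.τ m (i+(k-1)))) →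
          ∑ n ∈ s, (MeasureTheory.volume (J n)).toReal ≤ c * K.len m i (k-1) := by
  classical
  set Q : ℕ := 2 * ((2*k - 1) * (2*k - 1)) + 1 with hQ
  refine ⟨(Q : ℝ), by positivity, ?_⟩
  intro K γ hγ hreg J hJ m i hm hi1 hi2 s hs
  set L := K.τ m i with hLdef
  set R := K.τ m (i + (k-1)) with hRdef
  have hm1 : (1:ℕ) ≤ m := by omega
  have hLR : L ≤ R := tau_mono K hm1 (by omega) (by omega) (by omega)
  have hlen : K.len m i (k-1) = R - L := rfl
  rcases s.eq_empty_or_nonempty with rfl | hne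
  · simp only [Finset.sum_empty]
    rw [hlen]
    apply mul_nonneg (by positivity) (by linarith)
  set n0 := s.min' hne with hn0
  have hn0s : n0 ∈ s := s.min'_mem hne
  have hcnt : ∀ n ∈ s, Fc K n R = Gc K n L + k := by
    intro n hn
    exact card_filter_eq K (hs n hn).1 hk hLR (hs n hn).2.1
  -- canonical endpoints
  set φ : ℕ → ℝ × ℝ := fun n => (sInf (J n), sSup (J n)) with hφ
  have hform : ∀ n ∈ s, J n = Set.Icc (φ n).1 (φ n).2 ∧ (φ n).1 ≤ (φ n).2
      ∧ L ≤ (φ n).1 ∧ (φ n).2 ≤ R := by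
    intro n hn
    have hn2 := (hs n hn).1
    obtain ⟨j0, hj0Λ1, l, hlk, hEq, -⟩ := hJ n hn2
    have hj0Λ0 : j0 ∈ K.Λ0 n := (Finset.mem_filter.mp hj0Λ1).1
    have hj0Icc := Finset.mem_Icc.mp (Finset.mem_filter.mp hj0Λ0).1
    have hi0lb := i0_lb K n hn2
    have hi0ub := i0_ub K n hn2
    have huv : K.τ n (j0 + l) ≤ K.τ n (j0 + l + 1) :=
      tau_mono K (by omega) (by omega) (by omega) (by omega)
    have h1 : (φ n).1 = K.τ n (j0 + l) := by
      rw [hφ]; simp only; rw [hEq, csInf_Icc huv]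
    have h2 : (φ n).2 = K.τ n (j0 + l + 1) := by
      rw [hφ]; simp only; rw [hEq, csSup_Icc huv]
    have hJn : J n = Set.Icc (φ n).1 (φ n).2 := by rw [h1, h2, hEq]
    have hsubJ := (hs n hn).2.2
    have hmem1 : (φ n).1 ∈ Set.Icc L R := by
      apply hsubJ
      rw [hJn]
      exact Set.mem_Icc.mpr ⟨le_rfl, by rw [h1, h2]; exact huv⟩
    have hmem2 : (φ n).2 ∈ Set.Icc L R := by
      apply hsubJ
      rw [hJn]
      exact Set.mem_Icc.mpr ⟨by rw [h1, h2]; exact huv, le_rfl⟩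
    exact ⟨hJn, by rw [h1, h2]; exact huv, (Set.mem_Icc.mp hmem1).1, (Set.mem_Icc.mp hmem2).2⟩
  have hocc : ∀ n ∈ s, (φ n).1 < (φ n).2 → Occ K n (φ n).1 (φ n).2 := by
    intro n hn hlt
    exact occ K (hs n hn).1 (hJ n (hs n hn).1) (hform n hn).1 hlt
  have hw : ∀ n ∈ s, (volume (J n)).toReal = (φ n).2 - (φ n).1 := by
    intro n hn
    rw [(hform n hn).1, Real.volume_Icc, ENNReal.toReal_ofReal (by linarith [(hform n hn).2.1])]
  -- fiberwise
  have hfiber := (Finset.sum_fiberwise_of_maps_to (s := s) (t := s.image φ) (g := φ)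
    (fun n hn => Finset.mem_image_of_mem φ hn) (fun n => (volume (J n)).toReal))
  rw [← hfiber]
  -- bound each fiber
  have hfibbd : ∀ p ∈ s.image φ,
      ∑ n ∈ s.filter (fun n => φ n = p), (volume (J n)).toReal
        ≤ (Q : ℝ) * (volume (Set.Ioo p.1 p.2)).toReal := by
    intro p hp
    obtain ⟨np, hnps, hnpφ⟩ := Finset.mem_image.mp hp
    have hple : p.1 ≤ p.2 := by rw [← hnpφ]; exact (hform np hnps).2.1
    have hsumeq : ∑ n ∈ s.filter (fun n => φ n = p), (volume (J n)).toReal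
        = (s.filter (fun n => φ n = p)).card * (p.2 - p.1) := by
      rw [Finset.sum_congr rfl (fun n hn => ?_), Finset.sum_const, nsmul_eq_mul]
      have hn' := Finset.mem_filter.mp hn
      rw [hw n hn'.1, hn'.2]
    by_cases hplt : p.1 < p.2
    · have hvol : (volume (Set.Ioo p.1 p.2)).toReal = p.2 - p.1 := by
        rw [Real.volume_Ioo, ENNReal.toReal_ofReal (by linarith)]
      rw [hsumeq, hvol]
      have hLp : L ≤ p.1 := by rw [← hnpφ]; exact (hform np hnps).2.2.1
      have hpR : p.2 ≤ R := by rw [← hnpφ]; exact (hform np hnps).2.2.2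
      -- card bound
      have hsplit : s.filter (fun n => φ n = p) ⊆
          insert n0 ((s.filter (fun n => φ n = p ∧ R < K.t n))
            ∪ (s.filter (fun n => φ n = p ∧ K.t n < L))) := by
        intro n hn
        have hn' := Finset.mem_filter.mp hn
        by_cases hnn0 : n = n0
        · simp [hnn0]
        · have hn0lt : n0 < n :=
            lt_of_le_of_ne (s.min'_le n hn'.1) (fun h => hnn0 h.symm)
          have hfr := (frozen K (hs n0 hn0s).1 (le_of_lt hn0lt) hLR
            (hcnt n0 hn0s) (hcnt n hn'.1)).1 n hn0lt le_rfl
          rw [Set.mem_Icc, not_and_or, not_le, not_le] at hfr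
          simp only [Finset.mem_insert, Finset.mem_union, Finset.mem_filter]
          rcases hfr with h | h
          · right; right; exact ⟨hn'.1, hn'.2, h⟩
          · right; left; exact ⟨hn'.1, hn'.2, h⟩
      have hcardR : (s.filter (fun n => φ n = p ∧ R < K.t n)).card
          ≤ (2*k - 1) * (2*k - 1) := by
        apply right_card K hk hplt hpR
        intro q hq
        have hq' := Finset.mem_filter.mp hq
        refine ⟨(hs q hq'.1).1, ?_, hq'.2.2⟩
        have := hocc q hq'.1 (by rw [hq'.2.1]; exact hplt)
        rw [hq'.2.1] at this
        exact this
      have hcardL : (s.filter (fun n => φ n = p ∧ K.t n < L)).card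
          ≤ (2*k - 1) * (2*k - 1) := by
        apply left_card K hk hplt hLp
        intro q hq
        have hq' := Finset.mem_filter.mp hq
        refine ⟨(hs q hq'.1).1, ?_, hq'.2.2⟩
        have := hocc q hq'.1 (by rw [hq'.2.1]; exact hplt)
        rw [hq'.2.1] at this
        exact this
      have hcard : (s.filter (fun n => φ n = p)).card ≤ Q := by
        calc (s.filter (fun n => φ n = p)).card
            ≤ (insert n0 ((s.filter (fun n => φ n = p ∧ R < K.t n))
              ∪ (s.filter (fun n => φ n = p ∧ K.t n < L)))).card :=
              Finset.card_le_card hsplit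
          _ ≤ ((s.filter (fun n => φ n = p ∧ R < K.t n))
              ∪ (s.filter (fun n => φ n = p ∧ K.t n < L))).card + 1 :=
              Finset.card_insert_le _ _
          _ ≤ (s.filter (fun n => φ n = p ∧ R < K.t n)).card
              + (s.filter (fun n => φ n = p ∧ K.t n < L)).card + 1 := by
              have := Finset.card_union_le (s.filter (fun n => φ n = p ∧ R < K.t n))
                (s.filter (fun n => φ n = p ∧ K.t n < L))
              omega
          _ ≤ Q := by rw [hQ]; omega
      calc ((s.filter (fun n => φ n = p)).card : ℝ) * (p.2 - p.1)
          ≤ (Q : ℝ) * (p.2 - p.1) := by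
            apply mul_le_mul_of_nonneg_right _ (by linarith)
            exact_mod_cast hcard
        _ = (Q : ℝ) * (p.2 - p.1) := rfl
    · have hpe : p.1 = p.2 := le_antisymm hple (not_lt.mp hplt)
      rw [hsumeq, hpe]
      simp
  calc ∑ p ∈ s.image φ, ∑ n ∈ (s.filter (fun n => φ n = p)), (volume (J n)).toReal
      ≤ ∑ p ∈ s.image φ, (Q : ℝ) * (volume (Set.Ioo p.1 p.2)).toReal :=
        Finset.sum_le_sum hfibbd
    _ = (Q : ℝ) * ∑ p ∈ s.image φ, (volume (Set.Ioo p.1 p.2)).toReal := by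
        rw [Finset.mul_sum]
    _ ≤ (Q : ℝ) * (R - L) := by
        apply mul_le_mul_of_nonneg_left _ (by positivity)
        apply sum_lengths_le _ L R hLR
        · intro p hp
          obtain ⟨np, hnps, hnpφ⟩ := Finset.mem_image.mp hp
          have hLp : L ≤ p.1 := by rw [← hnpφ]; exact (hform np hnps).2.2.1
          have hpR : p.2 ≤ R := by rw [← hnpφ]; exact (hform np hnps).2.2.2
          intro x hx
          rw [Set.mem_Ioo] at hx ⊢
          exact ⟨lt_of_le_of_lt hLp hx.1, lt_of_lt_of_le hx.2 hpR⟩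
        · intro p hp q hq hpq
          simp only [Finset.coe_image, Set.mem_image, Finset.mem_coe] at hp hq
          obtain ⟨np, hnps, hnpφ⟩ := hp
          obtain ⟨nq, hnqs, hnqφ⟩ := hq
          by_cases hp1 : p.1 < p.2
          · by_cases hq1 : q.1 < q.2
            · have hop : Occ K np p.1 p.2 := by
                have := hocc np hnps (by rw [hnpφ]; exact hp1)
                rw [hnpφ] at this; exact this
              have hoq : Occ K nq q.1 q.2 := by
                have := hocc nq hnqs (by rw [hnqφ]; exact hq1)
                rw [hnqφ] at this; exact this
              have hbp : L ≤ p.1 ∧ p.2 ≤ R := by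
                rw [← hnpφ]; exact ⟨(hform np hnps).2.2.1, (hform np hnps).2.2.2⟩
              have hbq : L ≤ q.1 ∧ q.2 ≤ R := by
                rw [← hnqφ]; exact ⟨(hform nq hnqs).2.2.1, (hform nq hnqs).2.2.2⟩
              rcases le_total np nq with hle | hle
              · rcases pairs_eq_or_disjoint K (hs np hnps).1 hle hLR
                  (hcnt np hnps) (hcnt nq hnqs) hp1 hq1 hop hoq hbp hbq with he | hd
                · exact absurd (Prod.ext he.1 he.2) hpq
                · exact hd
              · rcases pairs_eq_or_disjoint K (hs nq hnqs).1 hle hLR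
                  (hcnt nq hnqs) (hcnt np hnps) hq1 hp1 hoq hop hbq hbp with he | hd
                · exact absurd (Prod.ext he.1.symm he.2.symm) hpq
                · exact hd.symm
            · have : Set.Ioo q.1 q.2 = ∅ := Set.Ioo_eq_empty hq1
              rw [this]
              exact disjoint_bot_right
          · have : Set.Ioo p.1 p.2 = ∅ := Set.Ioo_eq_empty hp1
            rw [this]
            exact disjoint_bot_left
    _ = (Q : ℝ) * K.len m i (k-1) := by rw [hlen]
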